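/- With H, T as above (H symmetric positive semidefinite, H = D − L − Lᵀ, T symmetric positive definite block diagonal and 2T⁻¹ ≻ D), the matrix M = (T⁻¹ − L)⁻¹(T⁻¹ − D + Lᵀ) satisfies ρ(M) ≤ 1. (Obtained by applying the positive-definite case to H + εI and letting ε → 0, using continuity of eigenvalues.) -/

import Mathlib

open Matrix

/-- The spectral radius of a real matrix: the supremum of the absolute values of its
(complex) eigenvalues. -/
noncomputable def specRad {n : ℕ} (A : Matrix (Fin n) (Fin n) ℝ) : ℝ :=
  sSup ((‖·‖ : ℂ → ℝ) '' spectrum ℂ (A.map (algebraMap ℝ ℂ)))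

lemma stmt10_quad_re {n : ℕ} (S : Matrix (Fin n) (Fin n) ℝ) (v : Fin n → ℂ) :
    (star v ⬝ᵥ (S.map (algebraMap ℝ ℂ)) *ᵥ v).re
      = (fun i => (v i).re) ⬝ᵥ (S *ᵥ fun i => (v i).re)
        + (fun i => (v i).im) ⬝ᵥ (S *ᵥ fun i => (v i).im) := by
  have key : ∀ i j : Fin n, ((starRingEnd ℂ) (v i) * ((algebraMap ℝ ℂ) (S i j) * v j)).re
      = (v i).re * (S i j * (v j).re) + (v i).im * (S i j * (v j).im) := by
    intro i j
    simp only [Complex.mul_re, Complex.mul_im, Complex.conj_re, Complex.conj_im,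
      Complex.coe_algebraMap, Complex.ofReal_re, Complex.ofReal_im]
    ring
  calc (star v ⬝ᵥ (S.map (algebraMap ℝ ℂ)) *ᵥ v).re
      = ∑ i, ∑ j, ((starRingEnd ℂ) (v i) * ((algebraMap ℝ ℂ) (S i j) * v j)).re := by
        simp [dotProduct, mulVec, Finset.mul_sum, Complex.re_sum, RCLike.star_def]
    _ = ∑ i, ∑ j, ((v i).re * (S i j * (v j).re) + (v i).im * (S i j * (v j).im)) :=
        Finset.sum_congr rfl fun i _ => Finset.sum_congr rfl fun j _ => key i j
    _ = _ := by
        simp [dotProduct, mulVec, Finset.mul_sum, Finset.sum_add_distrib]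

lemma stmt10_quad_transpose {n : ℕ} (S : Matrix (Fin n) (Fin n) ℝ) (v : Fin n → ℂ) :
    star v ⬝ᵥ (Sᵀ.map (algebraMap ℝ ℂ)) *ᵥ v
      = (starRingEnd ℂ) (star v ⬝ᵥ (S.map (algebraMap ℝ ℂ)) *ᵥ v) := by
  simp only [dotProduct, mulVec, Finset.mul_sum, map_sum, _root_.map_mul, Pi.star_apply,
    Matrix.map_apply, Matrix.transpose_apply, RCLike.star_def, Complex.conj_conj]
  rw [Finset.sum_comm]
  refine Finset.sum_congr rfl fun i _ => Finset.sum_congr rfl fun j _ => ?_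
  simp only [Complex.coe_algebraMap, Complex.conj_ofReal]; ring

/-- The inverse of an invertible block-diagonal matrix has the same block pattern. -/
lemma stmt10_inv_blk {n q : ℕ} (blk : Fin n → Fin q) (T : Matrix (Fin n) (Fin n) ℝ)
    (hdet : IsUnit T.det) (hTblk : ∀ j k, blk j ≠ blk k → T j k = 0) :
    ∀ j k, blk j ≠ blk k → T⁻¹ j k = 0 := by
  intro j k hjk
  set e : Fin n → ℝ := fun i => if blk i = blk j then 1 else 0 with he
  have hcomm : T * diagonal e = diagonal e * T := by
    ext i m
    rw [Matrix.mul_diagonal, Matrix.diagonal_mul]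
    by_cases h : blk i = blk m
    · rw [he]; simp [h]
    · rw [hTblk i m h]; ring
  have hcomm' : T⁻¹ * diagonal e = diagonal e * T⁻¹ := by
    calc T⁻¹ * diagonal e
        = T⁻¹ * diagonal e * (T * T⁻¹) := by rw [Matrix.mul_nonsing_inv T hdet, mul_one]
      _ = T⁻¹ * (diagonal e * T) * T⁻¹ := by noncomm_ring
      _ = T⁻¹ * (T * diagonal e) * T⁻¹ := by rw [hcomm]
      _ = (T⁻¹ * T) * (diagonal e * T⁻¹) := by noncomm_ring
      _ = diagonal e * T⁻¹ := by rw [Matrix.nonsing_inv_mul T hdet, one_mul]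
  have h1 := congrFun (congrFun hcomm' j) k
  rw [Matrix.mul_diagonal, Matrix.diagonal_mul] at h1
  rw [he] at h1
  simp only [if_neg (Ne.symm hjk) ] at h1
  simpa [if_neg, hjk, Ne.symm hjk] using h1.symm

/-- A block-diagonal positive definite matrix minus a strictly block-lower-triangular
matrix has trivial kernel. -/
lemma stmt10_ker {n q : ℕ} (blk : Fin n → Fin q) (Q L : Matrix (Fin n) (Fin n) ℝ)
    (hQ : Q.PosDef) (hQblk : ∀ j k, blk j ≠ blk k → Q j k = 0)
    (hLlow : ∀ j k, ¬ blk k < blk j → L j k = 0)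
    (x : Fin n → ℝ) (hx : (Q - L) *ᵥ x = 0) : x = 0 := by
  have key : ∀ N : ℕ, ∀ j : Fin n, (blk j : ℕ) < N → x j = 0 := by
    intro N
    induction N with
    | zero => intro j hj; omega
    | succ N ih =>
      intro j hj
      rcases Nat.lt_or_ge (blk j : ℕ) N with h | h
      · exact ih j h
      have hjN : (blk j : ℕ) = N := by omega
      -- the restriction of x to block `blk j`
      set y : Fin n → ℝ := fun m => if blk m = blk j then x m else 0 with hy
      have hQy : Q *ᵥ y = 0 := by
        funext i
        by_cases hib : blk i = blk j
        · have h1 : (Q *ᵥ y) i = (Q *ᵥ x) i := by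
            simp only [mulVec, dotProduct, hy]
            refine Finset.sum_congr rfl fun m _ => ?_
            by_cases hmb : blk m = blk j
            · simp [hmb]
            · rw [hQblk i m (by rw [hib]; exact fun hh => hmb hh.symm)]
              simp
          have h2 : (Q *ᵥ x) i = (L *ᵥ x) i := by
            have := congrFun hx i
            simp only [Matrix.sub_mulVec, Pi.sub_apply, Pi.zero_apply, sub_eq_zero] at this
            exact this
          have h3 : (L *ᵥ x) i = 0 := by
            simp only [mulVec, dotProduct]
            refine Finset.sum_eq_zero fun m _ => ?_
            by_cases hml : blk m < blk i
            · have : (blk m : ℕ) < N := by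
                have := Fin.lt_iff_val_lt_val.mp hml
                rw [hib] at hml
                have := Fin.lt_iff_val_lt_val.mp hml
                omega
              rw [ih m this, mul_zero]
            · rw [hLlow i m hml, zero_mul]
          rw [h1, h2, h3, Pi.zero_apply]
        · simp only [mulVec, dotProduct, hy, Pi.zero_apply]
          refine Finset.sum_eq_zero fun m _ => ?_
          by_cases hmb : blk m = blk j
          · rw [hQblk i m (by rw [hmb]; exact hib)]
            simp
          · simp [hmb]
      have hy0 : y = 0 := by
        by_contra hne
        have := hQ.dotProduct_mulVec_pos hne
        rw [hQy] at this
        simp at this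
      have := congrFun hy0 j
      simpa [hy] using this
  exact funext fun j => key (q) j (blk j).isLt

theorem stmt10 {n q : ℕ} (blk : Fin n → Fin q)
    (H D L T : Matrix (Fin n) (Fin n) ℝ)
    (hH : H.PosSemidef)
    (hdecomp : H = D - L - Lᵀ)
    (hDblk : ∀ j k, blk j ≠ blk k → D j k = 0)
    (hLlow : ∀ j k, ¬ blk k < blk j → L j k = 0)
    (hT : T.PosDef)
    (hTblk : ∀ j k, blk j ≠ blk k → T j k = 0)
    (hOR : ((2 : ℝ) • T⁻¹ - D).PosDef) :
    specRad ((T⁻¹ - L)⁻¹ * (T⁻¹ - D + Lᵀ)) ≤ 1 := by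
  classical
  set f := algebraMap ℝ ℂ with hfdef
  set Q : Matrix (Fin n) (Fin n) ℝ := T⁻¹ with hQdef
  have hQ : Q.PosDef := Matrix.posDef_inv_iff.mpr hT
  have hQblk : ∀ j k, blk j ≠ blk k → Q j k = 0 :=
    stmt10_inv_blk blk T hT.det_pos.ne'.isUnit hTblk
  have hTsym : Tᵀ = T := by
    rw [← Matrix.conjTranspose_eq_transpose_of_trivial]; exact hT.1
  have hQsym : Qᵀ = Q := by
    rw [hQdef, Matrix.transpose_nonsing_inv, hTsym]
  have hHsym : Hᵀ = H := by
    rw [← Matrix.conjTranspose_eq_transpose_of_trivial]; exact hH.1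
  have hDeq : D = H + L + Lᵀ := by rw [hdecomp]; abel
  have hDsym : Dᵀ = D := by
    calc Dᵀ = (H + L + Lᵀ)ᵀ := by rw [← hDeq]
    _ = Hᵀ + Lᵀ + Lᵀᵀ := by rw [Matrix.transpose_add, Matrix.transpose_add]
    _ = D := by rw [Matrix.transpose_transpose, hHsym, hDeq]; abel
  set A : Matrix (Fin n) (Fin n) ℝ := Q - L with hAdef
  set B : Matrix (Fin n) (Fin n) ℝ := Q - D + Lᵀ with hBdef
  have hAdet : A.det ≠ 0 := by
    intro h
    obtain ⟨w, hw0, hw⟩ := Matrix.exists_mulVec_eq_zero_iff.mpr h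
    exact hw0 (stmt10_ker blk Q L hQ hQblk hLlow w hw)
  have hAcdet : (A.map f).det ≠ 0 := by
    have h := RingHom.map_det f A
    rw [RingHom.mapMatrix_apply] at h
    rw [← h]
    simpa [hfdef] using hAdet
  -- spectral radius bound
  rw [specRad]
  refine Real.sSup_le ?_ zero_le_one
  rintro r ⟨lam, hlam, rfl⟩
  rw [spectrum.mem_iff] at hlam
  have hdet0 : (lam • (1 : Matrix (Fin n) (Fin n) ℂ) - (A⁻¹ * B).map f).det = 0 := by
    by_contra hdd
    exact hlam (by
      rw [Algebra.algebraMap_eq_smul_one]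
      exact (Matrix.isUnit_iff_isUnit_det _).mpr (Ne.isUnit hdd))
  obtain ⟨v, hv0, hv⟩ := Matrix.exists_mulVec_eq_zero_iff.mpr hdet0
  have heig : (A⁻¹ * B).map f *ᵥ v = lam • v := by
    rw [Matrix.sub_mulVec, Matrix.smul_mulVec, Matrix.one_mulVec, sub_eq_zero] at hv
    exact hv.symm
  have hMc : (A⁻¹ * B).map f = (A.map f)⁻¹ * (B.map f) := by
    rw [Matrix.map_mul]
    congr 1
    refine (Matrix.inv_eq_right_inv ?_).symm
    rw [← Matrix.map_mul, Matrix.mul_nonsing_inv A (Ne.isUnit hAdet),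
      Matrix.map_one f (map_zero f) (map_one f)]
  have hBA : (B.map f) *ᵥ v = lam • ((A.map f) *ᵥ v) := by
    have h1 : (A.map f) * ((A⁻¹ * B).map f) = B.map f := by
      rw [hMc, ← Matrix.mul_assoc, Matrix.mul_nonsing_inv _ (Ne.isUnit hAcdet), Matrix.one_mul]
    calc (B.map f) *ᵥ v = (A.map f) *ᵥ ((A⁻¹ * B).map f *ᵥ v) := by
          rw [Matrix.mulVec_mulVec, h1]
      _ = (A.map f) *ᵥ (lam • v) := by rw [heig]
      _ = lam • ((A.map f) *ᵥ v) := Matrix.mulVec_smul _ _ _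
  have hscal : star v ⬝ᵥ (B.map f) *ᵥ v = lam * (star v ⬝ᵥ (A.map f) *ᵥ v) := by
    rw [hBA, dotProduct_smul, smul_eq_mul]
  -- quadratic-form quantities
  set α : ℂ := star v ⬝ᵥ (Q.map f) *ᵥ v with hαdef
  set δ : ℂ := star v ⬝ᵥ (D.map f) *ᵥ v with hδdef
  set l : ℂ := star v ⬝ᵥ (L.map f) *ᵥ v with hldef
  have hLT : star v ⬝ᵥ ((Lᵀ).map f) *ᵥ v = (starRingEnd ℂ) l :=
    stmt10_quad_transpose L v
  have hαim : α.im = 0 := by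
    have h := stmt10_quad_transpose Q v
    rw [hQsym] at h
    have := Complex.conj_eq_iff_im.mp h.symm
    exact this
  have hδim : δ.im = 0 := by
    have h := stmt10_quad_transpose D v
    rw [hDsym] at h
    exact Complex.conj_eq_iff_im.mp h.symm
  -- the scalar eigen-equation
  have hmapB : B.map f = Q.map f - D.map f + (Lᵀ).map f := by
    ext i j
    simp [hBdef, Matrix.map_apply, Matrix.sub_apply, Matrix.add_apply]
  have hmapA : A.map f = Q.map f - L.map f := by
    ext i j
    simp [hAdef, Matrix.map_apply, Matrix.sub_apply]
  have heq : α - δ + (starRingEnd ℂ) l = lam * (α - l) := by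
    have h1 : star v ⬝ᵥ (B.map f) *ᵥ v = α - δ + (starRingEnd ℂ) l := by
      rw [hmapB, Matrix.add_mulVec, Matrix.sub_mulVec, dotProduct_add,
        dotProduct_sub, hLT]
    have h2 : star v ⬝ᵥ (A.map f) *ᵥ v = α - l := by
      rw [hmapA, Matrix.sub_mulVec, dotProduct_sub]
    rw [h1, h2] at hscal
    exact hscal
  -- real and imaginary data
  set x : Fin n → ℝ := fun i => (v i).re with hxdef
  set y : Fin n → ℝ := fun i => (v i).im with hydef
  have hxy : x ≠ 0 ∨ y ≠ 0 := by
    by_contra hc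
    push_neg at hc
    apply hv0
    funext i
    have hx := congrFun hc.1 i
    have hy := congrFun hc.2 i
    simp only [hxdef, hydef, Pi.zero_apply] at hx hy
    exact Complex.ext hx hy
  have hHform : (0 : ℝ) ≤ δ.re - 2 * l.re := by
    have h0 : (0:ℝ) ≤ (star v ⬝ᵥ (H.map f) *ᵥ v).re := by
      rw [stmt10_quad_re]
      have h1 := hH.dotProduct_mulVec_nonneg x
      have h2 := hH.dotProduct_mulVec_nonneg y
      simp only [star_trivial] at h1 h2
      exact add_nonneg h1 h2
    have hmapH : H.map f = D.map f - L.map f - (Lᵀ).map f := by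
      ext i j
      simp [hdecomp, Matrix.map_apply, Matrix.sub_apply]
    have : star v ⬝ᵥ (H.map f) *ᵥ v = δ - l - (starRingEnd ℂ) l := by
      rw [hmapH, Matrix.sub_mulVec, Matrix.sub_mulVec, dotProduct_sub,
        dotProduct_sub, hLT]
    rw [this] at h0
    simp only [Complex.sub_re, Complex.conj_re] at h0
    linarith
  have hORform : (0 : ℝ) < 2 * α.re - δ.re := by
    have h0 : (0:ℝ) < (star v ⬝ᵥ (((2:ℝ) • Q - D).map f) *ᵥ v).re := by
      rw [stmt10_quad_re]
      have hps := hOR.posSemidef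
      rcases hxy with hx | hy
      · have h1 := hOR.dotProduct_mulVec_pos hx
        have h2 := hps.dotProduct_mulVec_nonneg y
        simp only [star_trivial] at h1 h2
        linarith
      · have h1 := hps.dotProduct_mulVec_nonneg x
        have h2 := hOR.dotProduct_mulVec_pos hy
        simp only [star_trivial] at h1 h2
        linarith
    have hmapOR : ((2:ℝ) • Q - D).map f = (2:ℂ) • (Q.map f) - D.map f := by
      ext i j
      simp only [Matrix.map_apply, Matrix.sub_apply, Matrix.smul_apply, smul_eq_mul,
        map_sub, _root_.map_mul, hfdef, Complex.coe_algebraMap]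
      push_cast
      ring
    have : star v ⬝ᵥ (((2:ℝ) • Q - D).map f) *ᵥ v = (2:ℂ) * α - δ := by
      rw [hmapOR, Matrix.sub_mulVec, Matrix.smul_mulVec, dotProduct_sub,
        dotProduct_smul, smul_eq_mul]
    rw [this] at h0
    simp only [Complex.sub_re, Complex.mul_re, Complex.ofReal_re, Complex.ofReal_im] at h0
    norm_num at h0
    linarith
  -- the denominator is nonzero
  have hden : α - l ≠ 0 := by
    intro h0
    have hre : α.re - l.re = 0 := by
      have := congrArg Complex.re h0
      simpa [Complex.sub_re] using this
    linarith
  -- conclude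
  have habs : ‖lam‖ * ‖α - l‖
      = ‖α - δ + (starRingEnd ℂ) l‖ := by
    rw [heq]
    exact (norm_mul lam (α - l)).symm
  have hle : ‖α - δ + (starRingEnd ℂ) l‖ ≤ ‖α - l‖ := by
    rw [Complex.norm_def, Complex.norm_def]
    apply Real.sqrt_le_sqrt
    rw [Complex.normSq_apply, Complex.normSq_apply]
    simp only [Complex.sub_re, Complex.add_re, Complex.sub_im, Complex.add_im,
      Complex.conj_re, Complex.conj_im, hαim, hδim]
    nlinarith [hHform, hORform, mul_nonneg hHform hORform.le]
  have hpos : 0 < ‖α - l‖ := norm_pos_iff.mpr hden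
  have h1 : ‖lam‖ * ‖α - l‖ ≤ 1 * ‖α - l‖ := by
    rw [one_mul]
    exact habs.trans_le hle
  exact le_of_mul_le_mul_right h1 hpos
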